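/- Sum of transformed feature norms (inner inequality in the proof of Lemma C.5): Let x₁,…,x_K ∈ ℝ^d, let C be a real symmetric d×d matrix, and let A be a real symmetric positive semidefinite d×d matrix such that A − Σ_{τ=1}^K x_τ x_τᵀ is positive semidefinite. Then Σ_{τ=1}^K ‖C x_τ‖₂ ≤ √(K · d · ‖C A C‖). -/

import Mathlib

open Matrix

/-- Spectral norm (ℓ2→ℓ2 operator norm) of a real square matrix. -/
noncomputable def specNorm {d : ℕ} (M : Matrix (Fin d) (Fin d) ℝ) : ℝ :=
  ‖(Matrix.toEuclideanCLM (𝕜 := ℝ) M :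
      EuclideanSpace ℝ (Fin d) →L[ℝ] EuclideanSpace ℝ (Fin d))‖

lemma diag_le_specNorm {d : ℕ} (M : Matrix (Fin d) (Fin d) ℝ) (i : Fin d) :
    M i i ≤ specNorm M := by
  set e : EuclideanSpace ℝ (Fin d) := (WithLp.equiv 2 _).symm (Pi.single i 1)
  have he : ‖e‖ = 1 := by
    simp [e, EuclideanSpace.norm_eq, Pi.single_apply, Finset.sum_ite_eq',
      apply_ite (fun t : ℝ => t ^ 2)]
  have hinner : inner ℝ e ((Matrix.toEuclideanCLM (𝕜 := ℝ) M) e) = M i i := by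
    rw [show ((Matrix.toEuclideanCLM (𝕜 := ℝ) M) e) =
        (WithLp.equiv 2 _).symm (M *ᵥ Pi.single i 1) from
      Matrix.toEuclideanCLM_toLp M (Pi.single i 1)]
    simp [e, EuclideanSpace.inner_eq_star_dotProduct, dotProduct,
      Pi.single_apply, Matrix.mulVec_single]
  calc M i i = inner ℝ e ((Matrix.toEuclideanCLM (𝕜 := ℝ) M) e) := hinner.symm
    _ ≤ ‖e‖ * ‖(Matrix.toEuclideanCLM (𝕜 := ℝ) M) e‖ :=
        real_inner_le_norm _ _
    _ ≤ ‖e‖ * (specNorm M * ‖e‖) := by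
        gcongr
        exact ((Matrix.toEuclideanCLM (𝕜 := ℝ) M)).le_opNorm e
    _ = specNorm M := by rw [he]; ring

lemma psd_diag_nonneg {d : ℕ} {M : Matrix (Fin d) (Fin d) ℝ}
    (hM : M.PosSemidef) (i : Fin d) : 0 ≤ M i i := by
  have := hM.dotProduct_mulVec_nonneg (Pi.single i 1)
  simpa [dotProduct, Pi.single_apply, Matrix.mulVec_single] using this

/-- Sum of transformed feature norms (inner inequality in the proof of Lemma C.5):
if `C` is symmetric and `A` is PSD with `A − Σ_τ x_τ x_τᵀ` PSD, then
`Σ_τ ‖C x_τ‖₂ ≤ √(K·d·‖C A C‖)`. -/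
theorem sum_transformed_feature_norms
    {d K : ℕ} (x : Fin K → Fin d → ℝ)
    (C A : Matrix (Fin d) (Fin d) ℝ)
    (hC : C.IsHermitian) (hA : A.PosSemidef)
    (hAx : (A - ∑ τ, Matrix.vecMulVec (x τ) (x τ)).PosSemidef) :
    ∑ τ, Real.sqrt (∑ i, (C.mulVec (x τ)) i ^ 2) ≤
      Real.sqrt ((K : ℝ) * d * specNorm (C * A * C)) := by
  set S : Matrix (Fin d) (Fin d) ℝ := ∑ τ, Matrix.vecMulVec (x τ) (x τ) with hS
  have hCsymm : ∀ i j, C i j = C j i := by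
    intro i j
    have := hC.apply i j
    simpa using this.symm
  -- key identity: ∑ τ ∑ i (Cx)_i^2 = ∑ i (C*S*C) i i
  have hkey : ∑ τ, ∑ i, (C.mulVec (x τ)) i ^ 2 = ∑ i, (C * S * C) i i := by
    rw [Finset.sum_comm]
    refine Finset.sum_congr rfl fun i _ => ?_
    have : (C * S * C) i i = ∑ τ, (C * Matrix.vecMulVec (x τ) (x τ) * C) i i := by
      simp [hS, Finset.mul_sum, Finset.sum_mul, Matrix.sum_apply]
    rw [this]
    refine Finset.sum_congr rfl fun τ _ => ?_
    have : (C * Matrix.vecMulVec (x τ) (x τ) * C) i i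
        = (∑ j, C i j * x τ j) * (∑ k, x τ k * C k i) := by
      simp [Matrix.mul_apply, Matrix.vecMulVec_apply, Finset.sum_mul,
        Finset.mul_sum]
      rw [Finset.sum_comm]
      refine Finset.sum_congr rfl fun j _ => Finset.sum_congr rfl fun k _ => ?_
      rw [hCsymm i j, hCsymm k i]; ring
    rw [this]
    have h2 : (∑ k, x τ k * C k i) = ∑ j, C i j * x τ j := by
      refine Finset.sum_congr rfl fun k _ => ?_
      rw [hCsymm i k]; ring
    rw [h2]
    simp [Matrix.mulVec, dotProduct, pow_two]
  -- C*(A-S)*C is PSD, so diagonals of C*S*C are ≤ those of C*A*C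
  have hCherm : Cᴴ = C := hC
  have hPSD : (C * (A - S) * C).PosSemidef := by
    have := hAx.mul_mul_conjTranspose_same C
    rwa [hCherm] at this
  have hdiag : ∀ i, (C * S * C) i i ≤ (C * A * C) i i := by
    intro i
    have h0 := psd_diag_nonneg hPSD i
    have hexp : C * (A - S) * C = C * A * C - C * S * C := by
      rw [Matrix.mul_sub, Matrix.sub_mul]
    rw [hexp] at h0
    simpa [Matrix.sub_apply] using h0
  -- each diagonal of C*A*C ≤ specNorm
  have hbound : ∑ i, (C * A * C) i i ≤ (d : ℝ) * specNorm (C * A * C) := by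
    calc ∑ i, (C * A * C) i i ≤ ∑ _i : Fin d, specNorm (C * A * C) :=
          Finset.sum_le_sum fun i _ => diag_le_specNorm _ i
      _ = (d : ℝ) * specNorm (C * A * C) := by simp [mul_comm]
  -- Cauchy–Schwarz
  have hLHS_nonneg : 0 ≤ ∑ τ, Real.sqrt (∑ i, (C.mulVec (x τ)) i ^ 2) :=
    Finset.sum_nonneg fun τ _ => Real.sqrt_nonneg _
  have hsum_le : ∑ τ, ∑ i, (C.mulVec (x τ)) i ^ 2 ≤ (d : ℝ) * specNorm (C * A * C) := by
    rw [hkey]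
    exact le_trans (Finset.sum_le_sum fun i _ => hdiag i) hbound
  have hcs : (∑ τ, Real.sqrt (∑ i, (C.mulVec (x τ)) i ^ 2)) ^ 2 ≤
      (K : ℝ) * ∑ τ, ∑ i, (C.mulVec (x τ)) i ^ 2 := by
    have := Finset.sum_mul_sq_le_sq_mul_sq Finset.univ
      (fun τ => Real.sqrt (∑ i, (C.mulVec (x τ)) i ^ 2)) (fun _ => (1 : ℝ))
    simp only [mul_one, one_pow, Finset.sum_const, Finset.card_univ,
      Fintype.card_fin, nsmul_eq_mul] at this
    calc (∑ τ, Real.sqrt (∑ i, (C.mulVec (x τ)) i ^ 2)) ^ 2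
        ≤ (∑ τ, Real.sqrt (∑ i, (C.mulVec (x τ)) i ^ 2) ^ 2) * K := this
      _ = (K : ℝ) * ∑ τ, ∑ i, (C.mulVec (x τ)) i ^ 2 := by
          rw [mul_comm]
          congr 1
          refine Finset.sum_congr rfl fun τ _ => ?_
          exact Real.sq_sqrt (Finset.sum_nonneg fun i _ => sq_nonneg _)
  have hfin : (∑ τ, Real.sqrt (∑ i, (C.mulVec (x τ)) i ^ 2)) ^ 2 ≤
      (K : ℝ) * d * specNorm (C * A * C) := by
    calc (∑ τ, Real.sqrt (∑ i, (C.mulVec (x τ)) i ^ 2)) ^ 2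
        ≤ (K : ℝ) * ∑ τ, ∑ i, (C.mulVec (x τ)) i ^ 2 := hcs
      _ ≤ (K : ℝ) * ((d : ℝ) * specNorm (C * A * C)) := by
          exact mul_le_mul_of_nonneg_left hsum_le (Nat.cast_nonneg K)
      _ = (K : ℝ) * d * specNorm (C * A * C) := by ring
  have hy : 0 ≤ (K : ℝ) * d * specNorm (C * A * C) :=
    mul_nonneg (mul_nonneg (Nat.cast_nonneg K) (Nat.cast_nonneg d)) (norm_nonneg _)
  exact (Real.le_sqrt hLHS_nonneg hy).mpr hfin
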